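/- Let c, k > 0 and U be a function assignment for ℕ^k. Suppose that for all p > 0 there exist a finite A ⊆ ℕ^k and E ⊆ ℕ with |E| = p and E^k ⊆ A such that U(A) has at most c regressive values on E^k. Then for all p > 0 there exist a finite A ⊆ ℕ^k and E ⊆ ℕ with |E| = p and E^k ⊆ A such that U(A) has at most ot(k) regressive values on E^k. -/

import Mathlib

/-- A function assignment for `α`: to each finite `A ⊆ α` it assigns a
function from `A` to `A` (values outside `A` are irrelevant). -/
structure FunAssign (α : Type*) where
  U : Finset α → α → α
  maps : ∀ A : Finset α, ∀ x ∈ A, U A x ∈ A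

/-- `x` and `y` have the same order type. -/
def SameOrderType {k : ℕ} (x y : Fin k → ℕ) : Prop :=
  ∀ i j, x i < x j ↔ y i < y j

/-- `ot k`: the number of order types of elements of `ℕ^k`. -/
noncomputable def ot (k : ℕ) : ℕ :=
  Nat.card (Quot fun x y : Fin k → ℕ => SameOrderType x y)

/-- `f` has at most `c` regressive values on `E^k`. -/
def hasAtMostRegVals {k : ℕ} (f : (Fin k → ℕ) → (Fin k → ℕ))
    (E : Finset ℕ) (c : ℕ) : Prop :=
  {y : Fin k → ℕ | ∃ x : Fin k → ℕ, (∀ i, x i ∈ E) ∧ f x = y ∧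
      (⨆ i, y i) < ⨅ i, x i}.Finite ∧
  {y : Fin k → ℕ | ∃ x : Fin k → ℕ, (∀ i, x i ∈ E) ∧ f x = y ∧
      (⨆ i, y i) < ⨅ i, x i}.ncard ≤ c


def RamseyH (r : ℕ) (C : Type) (n N : ℕ) : Prop :=
  ∀ S : Finset ℕ, N ≤ S.card → ∀ f : Finset ℕ → C,
    ∃ T, T ⊆ S ∧ n ≤ T.card ∧ ∃ c0 : C, ∀ t ⊆ T, t.card = r → f t = c0

def sizeSeq (g : ℕ → ℕ) : ℕ → ℕ
  | 0 => 0
  | M + 1 => g (sizeSeq g M) + 1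

lemma chain (r : ℕ) (C : Type) (g : ℕ → ℕ) (hg : ∀ n, RamseyH r C n (g n)) :
    ∀ (M : ℕ) (S : Finset ℕ), sizeSeq g M ≤ S.card → ∀ f : Finset ℕ → C,
    ∃ (a : Fin M → ℕ) (c : Fin M → C), StrictMono a ∧ (∀ i, a i ∈ S) ∧
      ∀ i : Fin M, ∀ t : Finset ℕ,
        (∀ x ∈ t, (∃ j, x = a j) ∧ a i < x) → t.card = r →
        f (insert (a i) t) = c i := by
  intro M
  induction M with
  | zero =>
    intro S _ f
    exact ⟨Fin.elim0, Fin.elim0, fun i => i.elim0, fun i => i.elim0, fun i => i.elim0⟩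
  | succ M ih =>
    intro S hcard f
    have hS : S.Nonempty := Finset.card_pos.mp (by simp [sizeSeq] at hcard; omega)
    set a0 := S.min' hS with ha0
    have hcard' : g (sizeSeq g M) ≤ (S.erase a0).card := by
      rw [Finset.card_erase_of_mem (S.min'_mem hS)]
      simp [sizeSeq] at hcard; omega
    obtain ⟨T, hTS, hTcard, c0, hc0⟩ :=
      hg (sizeSeq g M) (S.erase a0) hcard' (fun t => f (insert a0 t))
    obtain ⟨a, c, hmono, hmemT, hhom⟩ := ih T hTcard f
    have haS : ∀ j, a j ∈ S.erase a0 := fun j => hTS (hmemT j)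
    have ha0lt : ∀ j, a0 < a j := by
      intro j
      have hm := Finset.mem_erase.mp (haS j)
      exact lt_of_le_of_ne (S.min'_le _ hm.2) (Ne.symm hm.1)
    refine ⟨Fin.cons a0 a, Fin.cons c0 c, ?_, ?_, ?_⟩
    · intro i j hij
      induction i using Fin.cases with
      | zero =>
        induction j using Fin.cases with
        | zero => exact absurd hij (lt_irrefl _)
        | succ j' => simpa using ha0lt j'
      | succ i' =>
        induction j using Fin.cases with
        | zero => exact absurd hij (Fin.not_lt_zero _)
        | succ j' =>
          simp only [Fin.cons_succ]
          exact hmono (Fin.succ_lt_succ_iff.mp hij)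
    · intro i
      induction i using Fin.cases with
      | zero => simpa using S.min'_mem hS
      | succ i' =>
        simp only [Fin.cons_succ]
        exact (Finset.mem_erase.mp (haS i')).2
    · intro i t hx htc
      induction i using Fin.cases with
      | zero =>
        simp only [Fin.cons_zero]
        refine hc0 t ?_ htc
        intro x hxt
        obtain ⟨⟨j, hj⟩, hlt⟩ := hx x hxt
        simp only [Fin.cons_zero] at hlt
        induction j using Fin.cases with
        | zero => simp only [Fin.cons_zero] at hj; omega
        | succ j' =>
          simp only [Fin.cons_succ] at hj
          subst hj; exact hmemT j'
      | succ i' =>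
        simp only [Fin.cons_succ]
        refine hhom i' t ?_ htc
        intro x hxt
        obtain ⟨⟨j, hj⟩, hlt⟩ := hx x hxt
        simp only [Fin.cons_succ] at hlt
        refine ⟨?_, hlt⟩
        induction j using Fin.cases with
        | zero =>
          simp only [Fin.cons_zero] at hj
          have := ha0lt i'
          omega
        | succ j' => exact ⟨j', by simpa using hj⟩

theorem ramsey_exists (r : ℕ) (C : Type) [Fintype C] [Nonempty C] :
    ∀ n, ∃ N, RamseyH r C n N := by
  induction r with
  | zero =>
    intro n
    refine ⟨n, fun S hS f => ?_⟩
    obtain ⟨T, hTS, hTcard⟩ := Finset.exists_subset_card_eq hS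
    exact ⟨T, hTS, hTcard.ge, f ∅, fun t _ htc => by rw [Finset.card_eq_zero.mp htc]⟩
  | succ r ih =>
    intro n
    classical
    choose g hg using ih
    set M := Fintype.card C * n with hM
    refine ⟨sizeSeq g M, fun S hS f => ?_⟩
    obtain ⟨a, c, hmono, hmemS, hhom⟩ := chain r C g hg M S hS f
    have hpig : ∃ b ∈ (Finset.univ : Finset C),
        n ≤ (Finset.univ.filter fun i : Fin M => c i = b).card := by
      apply Finset.exists_le_card_fiber_of_mul_le_card_of_maps_to
        (fun a _ => Finset.mem_univ (c a)) Finset.univ_nonempty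
      simp [hM]
    obtain ⟨b, -, hb⟩ := hpig
    set F := Finset.univ.filter fun i : Fin M => c i = b with hF
    refine ⟨F.image a, ?_, ?_, b, ?_⟩
    · intro x hx
      obtain ⟨i, -, rfl⟩ := Finset.mem_image.mp hx
      exact hmemS i
    · rwa [Finset.card_image_of_injective _ hmono.injective]
    · intro t ht htc
      have htne : t.Nonempty := Finset.card_pos.mp (by omega)
      set m := t.min' htne with hm
      obtain ⟨i, hiF, hia⟩ := Finset.mem_image.mp (ht (t.min'_mem htne))
      have hkey : f (insert (a i) (t.erase m)) = c i := by
        refine hhom i (t.erase m) ?_ (by rw [Finset.card_erase_of_mem (t.min'_mem htne)]; omega)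
        intro x hxt
        have hxt' := Finset.mem_erase.mp hxt
        obtain ⟨j, -, rfl⟩ := Finset.mem_image.mp (ht hxt'.2)
        refine ⟨⟨j, rfl⟩, ?_⟩
        rw [hia]
        exact lt_of_le_of_ne (t.min'_le _ hxt'.2) (Ne.symm hxt'.1)
      have : c i = b := (Finset.mem_filter.mp hiF).2
      rw [hia, Finset.insert_erase (t.min'_mem htne)] at hkey
      rw [hkey, this]

theorem multiRamsey (C : Type) [Fintype C] [Nonempty C] (k : ℕ) :
    ∀ n, ∃ N, ∀ S : Finset ℕ, N ≤ S.card → ∀ f : Finset ℕ → C,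
      ∃ T, T ⊆ S ∧ n ≤ T.card ∧
        ∀ r ≤ k, ∃ c0 : C, ∀ t ⊆ T, t.card = r → f t = c0 := by
  induction k with
  | zero =>
    intro n
    obtain ⟨N, hN⟩ := ramsey_exists 0 C n
    refine ⟨N, fun S hS f => ?_⟩
    obtain ⟨T, hTS, hTcard, c0, hc0⟩ := hN S hS f
    exact ⟨T, hTS, hTcard, fun r hr => ⟨c0, fun t ht htc => hc0 t ht (by omega)⟩⟩
  | succ k ih =>
    intro n
    obtain ⟨N1, hN1⟩ := ih n
    obtain ⟨N2, hN2⟩ := ramsey_exists (k + 1) C N1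
    refine ⟨N2, fun S hS f => ?_⟩
    obtain ⟨T1, hT1S, hT1card, ck1, hck1⟩ := hN2 S hS f
    obtain ⟨T, hTT1, hTcard, hallr⟩ := hN1 T1 hT1card f
    refine ⟨T, hTT1.trans hT1S, hTcard, fun r hr => ?_⟩
    by_cases hrk : r = k + 1
    · exact ⟨ck1, fun t ht htc => hck1 t (ht.trans hTT1) (hrk ▸ htc)⟩
    · exact hallr r (by omega)


lemma sot_refl {k : ℕ} (x : Fin k → ℕ) : SameOrderType x x := fun _ _ => Iff.rfl

lemma sot_symm {k : ℕ} {x y : Fin k → ℕ} (h : SameOrderType x y) : SameOrderType y x :=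
  fun i j => (h i j).symm

lemma sot_trans {k : ℕ} {x y z : Fin k → ℕ} (h1 : SameOrderType x y)
    (h2 : SameOrderType y z) : SameOrderType x z := fun i j => (h1 i j).trans (h2 i j)

lemma sot_eq_iff {k : ℕ} {x y : Fin k → ℕ} (h : SameOrderType x y) (i j : Fin k) :
    x i = x j ↔ y i = y j := by
  have h1 := h i j
  have h2 := h j i
  omega

lemma quot_mk_sot {k : ℕ} {x y : Fin k → ℕ}
    (h : Quot.mk (fun a b : Fin k → ℕ => SameOrderType a b) x = Quot.mk _ y) :
    SameOrderType x y := by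
  have hc := congrArg (Quot.lift (fun z => SameOrderType x z)
    (fun a b hab => propext ⟨fun hxa => sot_trans hxa hab,
      fun hxb => sot_trans hxb (sot_symm hab)⟩)) h
  exact cast hc (sot_refl x)

/-- rank of a value in a finset -/
def rk (t : Finset ℕ) (v : ℕ) : ℕ := (t.filter (· < v)).card

lemma rk_lt_rk {t : Finset ℕ} {v w : ℕ} (hv : v ∈ t) (hvw : v < w) :
    rk t v < rk t w := by
  apply Finset.card_lt_card
  rw [Finset.ssubset_iff_of_subset (Finset.monotone_filter_right t (fun a ha => by omega))]
  exact ⟨v, Finset.mem_filter.mpr ⟨hv, hvw⟩, fun hmem => by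
    have := (Finset.mem_filter.mp hmem).2; omega⟩

noncomputable def nth (t : Finset ℕ) (m : ℕ) : ℕ :=
  if h : ∃ v ∈ t, rk t v = m then h.choose else 0

lemma nth_rk {t : Finset ℕ} {v : ℕ} (hv : v ∈ t) : nth t (rk t v) = v := by
  have hex : ∃ w ∈ t, rk t w = rk t v := ⟨v, hv, rfl⟩
  rw [nth, dif_pos hex]
  obtain ⟨hw1, hw2⟩ := hex.choose_spec
  rcases lt_trichotomy hex.choose v with hlt | heq | hgt
  · exact absurd hw2 (by have := rk_lt_rk hw1 hlt; omega)
  · exact heq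
  · exact absurd hw2 (by have := rk_lt_rk hv hgt; omega)

def pat {k : ℕ} (x : Fin k → ℕ) (i : Fin k) : ℕ := rk (Finset.univ.image x) (x i)

lemma pat_lt {k : ℕ} (x : Fin k → ℕ) (i : Fin k) : pat x i < k := by
  have h1 : pat x i < (Finset.univ.image x).card := by
    unfold pat rk
    apply Finset.card_lt_card
    rw [Finset.ssubset_iff_of_subset (Finset.filter_subset _ _)]
    exact ⟨x i, Finset.mem_image_of_mem x (Finset.mem_univ i), fun hmem => by
      have := (Finset.mem_filter.mp hmem).2; omega⟩
  have h2 : (Finset.univ.image x).card ≤ k := by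
    calc (Finset.univ.image x).card ≤ (Finset.univ : Finset (Fin k)).card :=
        Finset.card_image_le
      _ = k := by simp
  omega

lemma nth_pat {k : ℕ} (x : Fin k → ℕ) (i : Fin k) :
    nth (Finset.univ.image x) (pat x i) = x i :=
  nth_rk (Finset.mem_image_of_mem x (Finset.mem_univ i))

lemma pat_lt_pat_iff {k : ℕ} (x : Fin k → ℕ) (i j : Fin k) :
    pat x i < pat x j ↔ x i < x j := by
  constructor
  · intro h
    rcases lt_trichotomy (x i) (x j) with hlt | heq | hgt
    · exact hlt
    · rw [pat, pat, heq] at h; omega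
    · have := rk_lt_rk (t := Finset.univ.image x)
        (Finset.mem_image_of_mem x (Finset.mem_univ j)) hgt
      rw [pat, pat] at h; omega
  · intro h
    exact rk_lt_rk (Finset.mem_image_of_mem x (Finset.mem_univ i)) h

lemma sot_pat {k : ℕ} (x : Fin k → ℕ) : SameOrderType x (pat x) :=
  fun i j => (pat_lt_pat_iff x i j).symm

lemma finite_quot (k : ℕ) :
    Finite (Quot fun x y : Fin k → ℕ => SameOrderType x y) := by
  apply Finite.of_surjective
    (fun σ : Fin k → Fin k => Quot.mk (fun x y : Fin k → ℕ => SameOrderType x y)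
      (fun i => (σ i : ℕ)))
  intro q
  induction q using Quot.ind with
  | _ x =>
    refine ⟨fun i => ⟨pat x i, pat_lt x i⟩, ?_⟩
    exact Quot.sound (sot_symm (sot_pat x))

lemma card_image_congr {α β γ : Type*} [DecidableEq β] [DecidableEq γ]
    (s : Finset α) (f : α → β) (g : α → γ)
    (h : ∀ a ∈ s, ∀ b ∈ s, f a = f b ↔ g a = g b) :
    (s.image f).card = (s.image g).card := by
  classical
  induction s using Finset.induction_on with
  | empty => simp
  | @insert a s ha ih =>
    rw [Finset.image_insert, Finset.image_insert]
    have hmem : f a ∈ s.image f ↔ g a ∈ s.image g := by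
      simp only [Finset.mem_image]
      constructor
      · rintro ⟨b, hb, hba⟩
        exact ⟨b, hb, ((h b (by simp [hb]) a (by simp)).mp hba)⟩
      · rintro ⟨b, hb, hba⟩
        exact ⟨b, hb, ((h b (by simp [hb]) a (by simp)).mpr hba)⟩
    have ih' := ih (fun a ha b hb => h a (by simp [ha]) b (by simp [hb]))
    by_cases hfa : f a ∈ s.image f
    · rw [Finset.insert_eq_self.mpr hfa, Finset.insert_eq_self.mpr (hmem.mp hfa), ih']
    · rw [Finset.card_insert_of_notMem hfa,
        Finset.card_insert_of_notMem (fun hga => hfa (hmem.mpr hga)), ih']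

lemma card_image_eq {k : ℕ} {x x' : Fin k → ℕ} (h : SameOrderType x x') :
    (Finset.univ.image x).card = (Finset.univ.image x').card :=
  card_image_congr Finset.univ x x' (fun a _ b _ => sot_eq_iff h a b)

lemma pat_congr {k : ℕ} {x x' : Fin k → ℕ} (h : SameOrderType x x') :
    pat x = pat x' := by
  funext i
  have hset : ∀ (y : Fin k → ℕ), (Finset.univ.image y).filter (· < y i) =
      (Finset.univ.filter fun j => y j < y i).image y := by
    intro y
    ext v
    simp only [Finset.mem_filter, Finset.mem_image, Finset.mem_univ, true_and]
    constructor
    · rintro ⟨⟨j, rfl⟩, hv⟩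
      exact ⟨j, hv, rfl⟩
    · rintro ⟨j, hj, rfl⟩
      exact ⟨⟨j, rfl⟩, hj⟩
  have hfilt : (Finset.univ.filter fun j => x j < x i) =
      (Finset.univ.filter fun j => x' j < x' i) := by
    ext j; simp [h j i]
  rw [pat, pat, rk, rk, hset x, hset x', hfilt]
  exact card_image_congr _ x x' (fun a _ b _ => sot_eq_iff h a b)

/-- Lemma 3.12. -/
theorem stmt_9 (c k : ℕ) (hc : 0 < c) (hk : 0 < k) (V : FunAssign (Fin k → ℕ))
    (h : ∀ p : ℕ, 0 < p → ∃ (A : Finset (Fin k → ℕ)) (E : Finset ℕ),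
      E.card = p ∧ (∀ x : Fin k → ℕ, (∀ i, x i ∈ E) → x ∈ A) ∧
      hasAtMostRegVals (V.U A) E c) :
    ∀ p : ℕ, 0 < p → ∃ (A : Finset (Fin k → ℕ)) (E : Finset ℕ),
      E.card = p ∧ (∀ x : Fin k → ℕ, (∀ i, x i ∈ E) → x ∈ A) ∧
      hasAtMostRegVals (V.U A) E (ot k) := by
  classical
  intro p hp
  obtain ⟨N, hN⟩ := multiRamsey ((Fin k → Fin k) → Fin (c + 1)) k p
  obtain ⟨A, E, hEcard, hEA, hYfin, hYcard⟩ := h (max N 1) (by omega)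
  set f := V.U A with hf
  set Y : Set (Fin k → ℕ) :=
    {y | ∃ x : Fin k → ℕ, (∀ i, x i ∈ E) ∧ f x = y ∧ (⨆ i, y i) < ⨅ i, x i} with hYdef
  haveI : Fintype ↥Y := hYfin.fintype
  have hYc : Fintype.card ↥Y ≤ c := by
    have h1 := hYcard
    rwa [Set.ncard_eq_toFinset_card', Set.toFinset_card] at h1
  set code : ↥Y → Fin c := fun v => Fin.castLE hYc ((Fintype.equivFin ↥Y) v) with hcodedef
  have hcode : Function.Injective code := fun u v huv =>
    (Fintype.equivFin ↥Y).injective (Fin.castLE_injective hYc huv)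
  set χ : Finset ℕ → (Fin k → Fin k) → Fin (c + 1) := fun t σ =>
    if hmem : f (fun i => nth t (σ i : ℕ)) ∈ Y then (code ⟨_, hmem⟩).castSucc
    else Fin.last c with hχdef
  obtain ⟨T, hTE, hpT, hhom⟩ := hN E (by rw [hEcard]; exact le_max_left N 1) χ
  obtain ⟨E', hE'T, hE'card⟩ := Finset.exists_subset_card_eq hpT
  have key : ∀ x x' : Fin k → ℕ, (∀ i, x i ∈ E') → (∀ i, x' i ∈ E') →
      SameOrderType x x' → f x ∈ Y → f x = f x' := by
    intro x x' hx hx' hsot hfxY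
    set t := Finset.univ.image x with ht
    set t' := Finset.univ.image x' with ht'
    have htT : t ⊆ T := by
      intro v hv
      obtain ⟨i, -, rfl⟩ := Finset.mem_image.mp hv
      exact hE'T (hx i)
    have ht'T : t' ⊆ T := by
      intro v hv
      obtain ⟨i, -, rfl⟩ := Finset.mem_image.mp hv
      exact hE'T (hx' i)
    have hdk : t.card ≤ k := by
      calc t.card ≤ (Finset.univ : Finset (Fin k)).card := Finset.card_image_le
        _ = k := by simp
    have htt' : t'.card = t.card := (card_image_eq hsot).symm
    obtain ⟨c0, hc0⟩ := hhom t.card hdk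
    have hχeq : χ t = χ t' := (hc0 t htT rfl).trans (hc0 t' ht'T htt').symm
    have hPeq : pat x = pat x' := pat_congr hsot
    set σ : Fin k → Fin k := fun i => ⟨pat x i, pat_lt x i⟩ with hσ
    have hxe : (fun i => nth t ((σ i : ℕ))) = x := funext fun i => nth_pat x i
    have hx'e : (fun i => nth t' ((σ i : ℕ))) = x' := by
      funext i
      show nth t' (pat x i) = x' i
      rw [show pat x i = pat x' i from congrFun hPeq i]
      exact nth_pat x' i
    have h2 := congrFun hχeq σ
    rw [hχdef] at h2
    simp only [hxe, hx'e] at h2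
    rw [dif_pos hfxY] at h2
    by_cases hfx' : f x' ∈ Y
    · rw [dif_pos hfx'] at h2
      have h3 := hcode (Fin.castSucc_injective _ h2)
      exact congrArg Subtype.val h3
    · rw [dif_neg hfx'] at h2
      exact absurd h2 (ne_of_lt (Fin.castSucc_lt_last _))
  refine ⟨A, E', hE'card, fun x hx => hEA x (fun i => hTE (hE'T (hx i))), ?_, ?_⟩
  · apply hYfin.subset
    rintro y ⟨x, hx, hfx, hlt⟩
    exact ⟨x, fun i => hTE (hE'T (hx i)), hfx, hlt⟩
  · set Y' : Set (Fin k → ℕ) :=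
      {y | ∃ x : Fin k → ℕ, (∀ i, x i ∈ E') ∧ f x = y ∧ (⨆ i, y i) < ⨅ i, x i} with hY'def
    have hsub : Y' ⊆ Y := by
      rintro y ⟨x, hx, hfx, hlt⟩
      exact ⟨x, fun i => hTE (hE'T (hx i)), hfx, hlt⟩
    haveI hQfin : Finite (Quot fun x y : Fin k → ℕ => SameOrderType x y) := finite_quot k
    have hY'w : ∀ y : ↥Y', ∃ x : Fin k → ℕ, (∀ i, x i ∈ E') ∧ f x = (y : Fin k → ℕ) ∧
        (⨆ i, (y : Fin k → ℕ) i) < ⨅ i, x i := fun y => y.2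
    choose w hw1 hw2 hw3 using hY'w
    have hΦ : Function.Injective
        (fun y : ↥Y' => Quot.mk (fun x y : Fin k → ℕ => SameOrderType x y) (w y)) := by
      intro y z hyz
      have hsot := quot_mk_sot hyz
      have hyY' : (y : Fin k → ℕ) ∈ Y' := y.2
      have hfwY : f (w y) ∈ Y := hsub (by rw [hw2 y]; exact hyY')
      have hfeq := key (w y) (w z) (hw1 y) (hw1 z) hsot hfwY
      apply Subtype.ext
      rw [← hw2 y, ← hw2 z, hfeq]
    calc Y'.ncard = Nat.card ↥Y' := (Nat.card_coe_set_eq Y').symm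
      _ ≤ Nat.card (Quot fun x y : Fin k → ℕ => SameOrderType x y) :=
          Nat.card_le_card_of_injective _ hΦ
      _ = ot k := rfl
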